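/- Let M be a real inner product space of dimension ≥ 3, ξ ∈ M a unit vector, H ⊆ SO(M) the stabilizer of the line ℝξ, and V ∈ O(M) an orthogonal map with Vξ ∉ ℝξ. Then the closure of the subgroup generated by H ∪ V⁻¹HV is all of SO(M). -/

import Mathlib

open Module Submodule

section KitaevAux
set_option linter.unusedSectionVars false


lemma sqrt_add_le' {a b : ℝ} (ha : 0 ≤ a) (hb : 0 ≤ b) :
    Real.sqrt (a + b) ≤ Real.sqrt a + Real.sqrt b := by
  have h : a + b ≤ (Real.sqrt a + Real.sqrt b) ^ 2 := by
    nlinarith [Real.sq_sqrt ha, Real.sq_sqrt hb, Real.sqrt_nonneg a, Real.sqrt_nonneg b]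
  calc Real.sqrt (a + b) ≤ Real.sqrt ((Real.sqrt a + Real.sqrt b) ^ 2) := Real.sqrt_le_sqrt h
    _ = Real.sqrt a + Real.sqrt b :=
      Real.sqrt_sq (by positivity)

lemma overlap {c s t t' : ℝ} (hcs : c ^ 2 + s ^ 2 = 1) (hs : 0 < s)
    (ht : |t| ≤ 1) (ht' : |t'| ≤ 1) (hd : |t - t'| ≤ s ^ 2 / 2) :
    ∃ vv : ℝ, |vv - t * c| ≤ s * Real.sqrt (1 - t ^ 2) ∧
      |vv - t' * c| ≤ s * Real.sqrt (1 - t' ^ 2) := by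
  have ht2 : t ^ 2 ≤ 1 := by nlinarith [abs_nonneg t, sq_abs t, abs_le.1 ht]
  have ht'2 : t' ^ 2 ≤ 1 := by nlinarith [abs_nonneg t', sq_abs t', abs_le.1 ht']
  set r : ℝ := s * Real.sqrt (1 - t ^ 2) with hr
  set r' : ℝ := s * Real.sqrt (1 - t' ^ 2) with hr'
  have hrpos : 0 ≤ r := by positivity
  have hr'pos : 0 ≤ r' := by positivity
  set d : ℝ := |t - t'| with hdd
  clear_value r r' d
  have hd0 : 0 ≤ d := hdd ▸ abs_nonneg _
  have hs1 : s ≤ 1 := by nlinarith [sq_nonneg c]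
  have hd1 : d ≤ 1 := le_trans hd (by nlinarith)
  -- key: |t*c - t'*c| ≤ r + r'
  have key : |t * c - t' * c| ≤ r + r' := by
    have hq : 2 - t ^ 2 - t' ^ 2 ≥ d := by
      obtain ⟨hta, htb⟩ := abs_le.1 ht
      obtain ⟨hta', htb'⟩ := abs_le.1 ht'
      have hd1' : |t - t'| ≤ 1 := by rw [hdd] at hd1; exact hd1
      rcases abs_cases (t - t') with ⟨h1, h2⟩ | ⟨h1, h2⟩ <;> rw [hdd, h1]
      · rw [h1] at hd1'
        nlinarith [mul_nonneg (by linarith : (0:ℝ) ≤ 1 - t) (by linarith : (0:ℝ) ≤ 1 + t'),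
          mul_nonneg (by linarith : (0:ℝ) ≤ t - t') (by linarith : (0:ℝ) ≤ 1 - (t - t'))]
      · rw [h1] at hd1'
        nlinarith [mul_nonneg (by linarith : (0:ℝ) ≤ 1 - t') (by linarith : (0:ℝ) ≤ 1 + t),
          mul_nonneg (by linarith : (0:ℝ) ≤ t' - t) (by linarith : (0:ℝ) ≤ 1 - (t' - t))]
    have hstep1 : |t * c - t' * c| ≤ s * Real.sqrt d := by
      have h1 : |t * c - t' * c| = d * |c| := by
        rw [hdd, ← sub_mul, abs_mul]
      rw [h1]
      have hc1 : |c| ≤ 1 := by nlinarith [sq_abs c, abs_nonneg c, sq_nonneg s]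
      have h2 : (d * |c|) ^ 2 ≤ (s * Real.sqrt d) ^ 2 := by
        rw [mul_pow, mul_pow, Real.sq_sqrt hd0]
        have : d ^ 2 * |c| ^ 2 ≤ d ^ 2 * 1 := by
          apply mul_le_mul_of_nonneg_left _ (sq_nonneg d)
          nlinarith [sq_abs c, sq_nonneg s]
        have hds : d ^ 2 ≤ s ^ 2 * d := by
          have h4 : 0 ≤ s ^ 2 - d := by linarith [sq_nonneg s]
          nlinarith [mul_nonneg hd0 h4]
        linarith
      have h3 := Real.sqrt_le_sqrt h2
      rwa [Real.sqrt_sq (by positivity), Real.sqrt_sq (by positivity)] at h3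
    have hstep2 : s * Real.sqrt d ≤ r + r' := by
      rw [hr, hr', ← mul_add]
      apply mul_le_mul_of_nonneg_left _ hs.le
      calc Real.sqrt d ≤ Real.sqrt ((1 - t ^ 2) + (1 - t' ^ 2)) :=
            Real.sqrt_le_sqrt (by linarith)
        _ ≤ Real.sqrt (1 - t ^ 2) + Real.sqrt (1 - t' ^ 2) :=
            sqrt_add_le' (by linarith) (by linarith)
    exact hstep1.trans hstep2
  refine ⟨min (t * c + r) (t' * c + r'), abs_le.2 ⟨?_, ?_⟩, abs_le.2 ⟨?_, ?_⟩⟩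
  · rcases abs_le.1 key with ⟨k1, k2⟩
    have : t * c - r ≤ min (t * c + r) (t' * c + r') := le_min (by linarith) (by linarith)
    linarith
  · have := min_le_left (t * c + r) (t' * c + r'); linarith
  · rcases abs_le.1 key with ⟨k1, k2⟩
    have : t' * c - r' ≤ min (t * c + r) (t' * c + r') := le_min (by linarith) (by linarith)
    linarith
  · have := min_le_right (t * c + r) (t' * c + r'); linarith

variable {M : Type*} [NormedAddCommGroup M] [InnerProductSpace ℝ M] [FiniteDimensional ℝ M]

local notation "⟪" x ", " y "⟫" => @inner ℝ _ _ x y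


noncomputable def reflPerp (u : M) : M ≃ₗᵢ[ℝ] M := reflection ((ℝ ∙ u)ᗮ)

lemma reflPerp_fix {u x : M} (h : ⟪x, u⟫ = 0) : reflPerp u x = x :=
  reflection_mem_subspace_eq_self (Submodule.mem_orthogonal_singleton_iff_inner_left.2 h)

lemma reflPerp_det {u : M} (hu : u ≠ 0) :
    LinearEquiv.det (reflPerp u).toLinearEquiv = -1 := by
  rw [reflPerp, linearEquiv_det_reflection, Submodule.orthogonal_orthogonal,
    finrank_span_singleton hu, pow_one]

lemma reflPerp_apply (u x : M) :
    reflPerp u x = x - (2 * ⟪u, x⟫ / ‖u‖ ^ 2) • u := by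
  rw [reflPerp, reflection_orthogonal_apply, reflection_singleton_apply]
  simp only [RCLike.ofReal_real_eq_id, id_eq]
  rw [two_smul, two_mul]
  module

lemma reflPerp_swap {v w : M} (hvw : ‖v‖ = ‖w‖) (hne : v ≠ w) :
    reflPerp (v - w) v = w := by
  have hvw0 : v - w ≠ 0 := sub_ne_zero.2 hne
  have hn : ‖v - w‖ ^ 2 = 2 * ⟪v - w, v⟫ := by
    rw [norm_sub_sq_real, inner_sub_left, real_inner_self_eq_norm_sq, hvw,
      real_inner_comm]
    ring
  rw [reflPerp_apply, hn]
  have h2 : (2 : ℝ) * ⟪v - w, v⟫ ≠ 0 := by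
    intro h
    rw [h] at hn
    exact hvw0 (by simpa using (norm_eq_zero.1 (by nlinarith [norm_nonneg (v - w)])))
  rw [div_self h2, one_smul]
  abel

lemma exists_unit_orthogonal (hdim : 3 ≤ finrank ℝ M) (x y : M) :
    ∃ u : M, ‖u‖ = 1 ∧ ⟪x, u⟫ = 0 ∧ ⟪y, u⟫ = 0 := by
  classical
  set K : Submodule ℝ M := Submodule.span ℝ {x, y} with hK
  have hfr : finrank ℝ K ≤ 2 := by
    refine (finrank_span_le_card (R := ℝ) ({x, y} : Set M)).trans ?_
    simp [Set.toFinset_insert, Set.toFinset_singleton]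
    exact (Finset.card_insert_le _ _).trans (by simp)
  have horth : Kᗮ ≠ ⊥ := by
    intro hbot
    have := Submodule.finrank_add_finrank_orthogonal K
    rw [hbot, finrank_bot] at this
    omega
  obtain ⟨u₀, hu₀K, hu₀⟩ := Submodule.exists_mem_ne_zero_of_ne_bot horth
  refine ⟨‖u₀‖⁻¹ • u₀, ?_, ?_, ?_⟩
  · rw [norm_smul, norm_inv, norm_norm, inv_mul_cancel₀ (norm_ne_zero_iff.2 hu₀)]
  · rw [real_inner_smul_right,
      (Submodule.mem_orthogonal K u₀).1 hu₀K x (Submodule.subset_span (by simp))]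
    ring
  · rw [real_inner_smul_right,
      (Submodule.mem_orthogonal K u₀).1 hu₀K y (Submodule.subset_span (by simp))]
    ring

noncomputable def detIso : (M ≃ₗᵢ[ℝ] M) →* ℝˣ where
  toFun g := LinearEquiv.det g.toLinearEquiv
  map_one' := by
    ext
    rw [LinearEquiv.coe_det,
      show ((1 : M ≃ₗᵢ[ℝ] M).toLinearEquiv : M →ₗ[ℝ] M) = LinearMap.id from
        LinearMap.ext fun x => rfl]
    simp
  map_mul' g h := by
    ext
    simp only [Units.val_mul, LinearEquiv.coe_det]
    rw [show ((g * h).toLinearEquiv : M →ₗ[ℝ] M) =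
        (g.toLinearEquiv : M →ₗ[ℝ] M) ∘ₗ (h.toLinearEquiv : M →ₗ[ℝ] M) from
        LinearMap.ext fun x => rfl, LinearMap.det_comp]

lemma detIso_apply (g : M ≃ₗᵢ[ℝ] M) : detIso g = LinearEquiv.det g.toLinearEquiv := rfl

lemma lat_move (hdim : 3 ≤ finrank ℝ M) {ξ x y : M} (hξ : ‖ξ‖ = 1)
    (hx : ‖x‖ = 1) (hy : ‖y‖ = 1) (hxy : ⟪ξ, x⟫ = ⟪ξ, y⟫) :
    ∃ h : M ≃ₗᵢ[ℝ] M, LinearEquiv.det h.toLinearEquiv = 1 ∧ h ξ = ξ ∧ h x = y := by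
  by_cases hxe : x = y
  · exact ⟨1, map_one (detIso (M := M)), rfl, by rw [hxe]; rfl⟩
  have hξξ : ⟪ξ, ξ⟫ = 1 := by rw [real_inner_self_eq_norm_sq, hξ]; norm_num
  set t : ℝ := ⟪ξ, x⟫ with htdef
  set v : M := x - t • ξ with hvdef
  set w : M := y - t • ξ with hwdef
  have hvξ : ⟪ξ, v⟫ = 0 := by
    rw [hvdef, inner_sub_right, real_inner_smul_right, hξξ, ← htdef]
    ring
  have hwξ : ⟪ξ, w⟫ = 0 := by
    rw [hwdef, inner_sub_right, real_inner_smul_right, hξξ, ← hxy]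
    ring
  have hnv : ‖v‖ = ‖w‖ := by
    have h1 : ‖v‖ ^ 2 = ‖w‖ ^ 2 := by
      rw [hvdef, hwdef, norm_sub_sq_real, norm_sub_sq_real, real_inner_smul_right,
        real_inner_smul_right, real_inner_comm ξ x, real_inner_comm ξ y,
        ← htdef, ← hxy, hx, hy]
    calc ‖v‖ = Real.sqrt (‖v‖ ^ 2) := (Real.sqrt_sq (norm_nonneg v)).symm
      _ = Real.sqrt (‖w‖ ^ 2) := by rw [h1]
      _ = ‖w‖ := Real.sqrt_sq (norm_nonneg w)
  have hvw : v ≠ w := by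
    intro h
    exact hxe (by rw [hvdef, hwdef] at h; exact sub_left_inj.1 h)
  obtain ⟨u, hu1, huξ, huw⟩ := exists_unit_orthogonal hdim ξ w
  have hu0 : u ≠ 0 := by intro h; rw [h] at hu1; simp at hu1
  have hξvw : ⟪ξ, v - w⟫ = 0 := by rw [inner_sub_right, hvξ, hwξ]; ring
  have huy : ⟪y, u⟫ = 0 := by
    have hy' : y = w + t • ξ := by rw [hwdef]; abel
    rw [hy', inner_add_left, real_inner_smul_left, huw, huξ]
    ring
  refine ⟨reflPerp u * reflPerp (v - w), ?_, ?_, ?_⟩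
  · have : detIso (reflPerp u * reflPerp (v - w)) = 1 := by
      rw [map_mul, detIso_apply, detIso_apply, reflPerp_det hu0,
        reflPerp_det (sub_ne_zero.2 hvw)]
      simp
    exact this
  · show reflPerp u (reflPerp (v - w) ξ) = ξ
    rw [reflPerp_fix hξvw, reflPerp_fix huξ]
  · show reflPerp u (reflPerp (v - w) x) = y
    have hx' : x = v + t • ξ := by rw [hvdef]; abel
    have hstep : reflPerp (v - w) x = y := by
      rw [hx', map_add, LinearIsometryEquiv.map_smul, reflPerp_swap hnv hvw,
        reflPerp_fix hξvw, hwdef]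
      abel
    rw [hstep, reflPerp_fix huy]




lemma exists_unit_inner (hdim : 3 ≤ finrank ℝ M) {ξ ζ : M} (hξ : ‖ξ‖ = 1) (hζ : ‖ζ‖ = 1)
    {c s t vv : ℝ} (hc : ⟪ξ, ζ⟫ = c) (hs2 : s ^ 2 = 1 - c ^ 2) (hs : 0 < s)
    (ht : |t| ≤ 1) (hv : |vv - t * c| ≤ s * Real.sqrt (1 - t ^ 2)) :
    ∃ x : M, ‖x‖ = 1 ∧ ⟪ξ, x⟫ = t ∧ ⟪ζ, x⟫ = vv := by
  have hξξ : ⟪ξ, ξ⟫ = 1 := by rw [real_inner_self_eq_norm_sq, hξ]; norm_num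
  have hζζ : ⟪ζ, ζ⟫ = 1 := by rw [real_inner_self_eq_norm_sq, hζ]; norm_num
  have hζξ : ⟪ζ, ξ⟫ = c := by rw [real_inner_comm ξ ζ]; exact hc
  have hsne : s ≠ 0 := ne_of_gt hs
  have ht2 : t ^ 2 ≤ 1 := by nlinarith [sq_abs t, abs_nonneg t, abs_le.1 ht]
  set ξ' : M := s⁻¹ • (ζ - c • ξ) with hξ'def
  clear_value ξ'
  have hexp : ⟪ζ - c • ξ, ζ - c • ξ⟫ = 1 - c ^ 2 := by
    simp only [inner_sub_left, inner_sub_right, real_inner_smul_left, real_inner_smul_right,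
      hξξ, hζζ, hc, hζξ]
    ring
  have hξ'ξ' : ⟪ξ', ξ'⟫ = 1 := by
    rw [hξ'def, real_inner_smul_left, real_inner_smul_right, hexp, ← hs2]
    field_simp
  have hξ'norm : ‖ξ'‖ = 1 := by
    have hN : ‖ξ'‖ ^ 2 = 1 := by rw [← real_inner_self_eq_norm_sq, hξ'ξ']
    calc ‖ξ'‖ = Real.sqrt (‖ξ'‖ ^ 2) := (Real.sqrt_sq (norm_nonneg _)).symm
      _ = 1 := by rw [hN]; exact Real.sqrt_one
  have hξξ' : ⟪ξ, ξ'⟫ = 0 := by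
    rw [hξ'def, real_inner_smul_right, inner_sub_right, real_inner_smul_right, hξξ, hc]
    ring
  have hξ'ξ : ⟪ξ', ξ⟫ = 0 := by rw [real_inner_comm ξ ξ']; exact hξξ'
  have hζdecomp : ζ = c • ξ + s • ξ' := by
    rw [hξ'def, smul_smul, mul_inv_cancel₀ (ne_of_gt hs), one_smul]
    abel
  obtain ⟨e, he1, heξ, heξ'⟩ := exists_unit_orthogonal hdim ξ ξ'
  have hee : ⟪e, e⟫ = 1 := by rw [real_inner_self_eq_norm_sq, he1]; norm_num
  have hξe : ⟪ξ, e⟫ = 0 := heξ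
  have hξ'e : ⟪ξ', e⟫ = 0 := heξ'
  have heξ2 : ⟪e, ξ⟫ = 0 := by rw [real_inner_comm]; exact heξ
  have heξ'2 : ⟪e, ξ'⟫ = 0 := by rw [real_inner_comm]; exact heξ'
  set q : ℝ := (vv - t * c) / s with hqdef
  clear_value q
  have hq2 : q ^ 2 ≤ 1 - t ^ 2 := by
    have habs : |q| ≤ Real.sqrt (1 - t ^ 2) := by
      rw [hqdef, abs_div, abs_of_pos hs, div_le_iff₀ hs, mul_comm (Real.sqrt (1 - t ^ 2)) s]
      exact hv
    have h2 : q ^ 2 ≤ Real.sqrt (1 - t ^ 2) ^ 2 := by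
      rw [← sq_abs q]
      exact pow_le_pow_left₀ (abs_nonneg q) habs 2
    rwa [Real.sq_sqrt (by linarith)] at h2
  set r : ℝ := Real.sqrt (1 - t ^ 2 - q ^ 2) with hrdef
  clear_value r
  have hr2 : r ^ 2 = 1 - t ^ 2 - q ^ 2 := by rw [hrdef]; exact Real.sq_sqrt (by linarith)
  refine ⟨t • ξ + q • ξ' + r • e, ?_, ?_, ?_⟩
  · have hinner : ⟪t • ξ + q • ξ' + r • e, t • ξ + q • ξ' + r • e⟫ = 1 := by
      simp only [inner_add_left, inner_add_right, real_inner_smul_left, real_inner_smul_right,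
        hξξ, hξ'ξ', hee, hξξ', hξ'ξ, hξe, hξ'e, heξ2, heξ'2]
      linear_combination hr2
    have hN : ‖t • ξ + q • ξ' + r • e‖ ^ 2 = 1 := by
      rw [← real_inner_self_eq_norm_sq, hinner]
    calc ‖t • ξ + q • ξ' + r • e‖ = Real.sqrt (‖t • ξ + q • ξ' + r • e‖ ^ 2) :=
          (Real.sqrt_sq (norm_nonneg _)).symm
      _ = 1 := by rw [hN]; exact Real.sqrt_one
  · simp only [inner_add_right, real_inner_smul_right, hξξ, hξξ', hξe]
    ring
  · rw [hζdecomp]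
    simp only [inner_add_left, inner_add_right, real_inner_smul_left, real_inner_smul_right,
      hξξ, hξ'ξ', hξξ', hξ'ξ, hξe, hξ'e]
    rw [hqdef]
    field_simp
    ring

end KitaevAux

/-- Kitaev's lemma: let `M` be a real inner product space of dimension `≥ 3`,
`ξ` a unit vector, `H ⊆ SO(M)` the stabilizer of the line `ℝξ`, and
`V ∈ O(M)` with `Vξ ∉ ℝξ`. Then the subgroup generated by `H ∪ V⁻¹HV` is
dense in `SO(M)` (in the norm topology on linear maps). -/
theorem kitaev_dense_subgroup
    {M : Type*} [NormedAddCommGroup M] [InnerProductSpace ℝ M]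
    [FiniteDimensional ℝ M] (hdim : 3 ≤ Module.finrank ℝ M)
    (ξ : M) (hξ : ‖ξ‖ = 1)
    (V : M ≃ₗᵢ[ℝ] M) (hV : V ξ ∉ (ℝ ∙ ξ : Submodule ℝ M)) :
    let H : Set (M ≃ₗᵢ[ℝ] M) :=
      {g | LinearEquiv.det g.toLinearEquiv = 1 ∧
        (ℝ ∙ ξ : Submodule ℝ M).map g.toLinearEquiv.toLinearMap = ℝ ∙ ξ}
    ∀ g : M ≃ₗᵢ[ℝ] M, LinearEquiv.det g.toLinearEquiv = 1 →
      (g.toLinearIsometry.toContinuousLinearMap : M →L[ℝ] M) ∈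
        closure ((fun h : M ≃ₗᵢ[ℝ] M =>
            (h.toLinearIsometry.toContinuousLinearMap : M →L[ℝ] M)) ''
          (Subgroup.closure (H ∪ (fun h => V⁻¹ * h * V) '' H) : Set (M ≃ₗᵢ[ℝ] M))) := by
  intro H g hdetg
  classical
  set Gens : Set (M ≃ₗᵢ[ℝ] M) := H ∪ (fun h => V⁻¹ * h * V) '' H with hGensdef
  set G : Subgroup (M ≃ₗᵢ[ℝ] M) := Subgroup.closure Gens with hGdef
  suffices hg : g ∈ G by exact subset_closure ⟨g, hg, rfl⟩
  have hHsub : ∀ h : M ≃ₗᵢ[ℝ] M, LinearEquiv.det h.toLinearEquiv = 1 → h ξ = ξ → h ∈ G := by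
    intro h h1 h2
    apply Subgroup.subset_closure
    exact Set.mem_union_left _ ⟨h1, by simp [Submodule.map_span, h2]⟩
  have hHmove : ∀ x y : M, ‖x‖ = 1 → ‖y‖ = 1 → (inner ℝ ξ x : ℝ) = inner ℝ ξ y →
      ∃ h ∈ G, h x = y := by
    intro x y hx hy hxy
    obtain ⟨h, h1, h2, h3⟩ := lat_move hdim hξ hx hy hxy
    exact ⟨h, hHsub h h1 h2, h3⟩
  set ζ : M := V⁻¹ ξ with hζdef
  have hζnorm : ‖ζ‖ = 1 := by
    rw [hζdef, show (V⁻¹ : M ≃ₗᵢ[ℝ] M) ξ = V.symm ξ from rfl, V.symm.norm_map, hξ]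
  have hVζ : V ζ = ξ := V.apply_symm_apply ξ
  have hKmove : ∀ x y : M, ‖x‖ = 1 → ‖y‖ = 1 → (inner ℝ ζ x : ℝ) = inner ℝ ζ y →
      ∃ k ∈ G, k x = y := by
    intro x y hx hy hxy
    have hx' : ‖V x‖ = 1 := by rw [V.norm_map]; exact hx
    have hy' : ‖V y‖ = 1 := by rw [V.norm_map]; exact hy
    have hinner : (inner ℝ ξ (V x) : ℝ) = inner ℝ ξ (V y) := by
      rw [← hVζ, V.inner_map_map, V.inner_map_map]; exact hxy
    obtain ⟨h, h1, h2, h3⟩ := lat_move hdim hξ hx' hy' hinner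
    refine ⟨V⁻¹ * h * V, ?_, ?_⟩
    · apply Subgroup.subset_closure
      refine Set.mem_union_right _ ⟨h, ⟨h1, by simp [Submodule.map_span, h2]⟩, rfl⟩
    · show V⁻¹ (h (V x)) = y
      rw [h3]; exact V.symm_apply_apply y
  have hζspan : ζ ∉ (ℝ ∙ ξ : Submodule ℝ M) := by
    intro hmem
    apply hV
    obtain ⟨a, ha⟩ := Submodule.mem_span_singleton.1 hmem
    have ha0 : a ≠ 0 := by
      intro h0; rw [h0, zero_smul] at ha
      rw [← ha] at hζnorm; simp at hζnorm
    have hkey : a • V ξ = ξ := by rw [← map_smul, ha, hVζ]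
    refine Submodule.mem_span_singleton.2 ⟨a⁻¹, ?_⟩
    calc a⁻¹ • ξ = a⁻¹ • (a • V ξ) := by rw [hkey]
      _ = V ξ := by rw [smul_smul, inv_mul_cancel₀ ha0, one_smul]
  set c : ℝ := inner ℝ ξ ζ with hcdef
  have habs : |c| ≤ 1 := by
    have h := abs_real_inner_le_norm ξ ζ
    rw [hξ, hζnorm] at h; simpa [hcdef] using h
  have hc2 : c ^ 2 < 1 := by
    rcases lt_or_eq_of_le habs with hlt | heq
    · nlinarith [sq_abs c, abs_nonneg c]
    · exfalso
      rcases abs_eq (by norm_num : (0:ℝ) ≤ 1) |>.1 heq with hc1 | hc1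
      · have h1 : (inner ℝ ξ ζ : ℝ) = ‖ξ‖ * ‖ζ‖ := by
          rw [hξ, hζnorm, ← hcdef, hc1]; norm_num
        have h2 := inner_eq_norm_mul_iff_real.1 h1
        rw [hξ, hζnorm, one_smul, one_smul] at h2
        exact hζspan (Submodule.mem_span_singleton.2 ⟨1, by rw [one_smul, h2]⟩)
      · have h1 : (inner ℝ ξ (-ζ) : ℝ) = ‖ξ‖ * ‖-ζ‖ := by
          rw [inner_neg_right, hξ, norm_neg, hζnorm, ← hcdef, hc1]; norm_num
        have h2 := inner_eq_norm_mul_iff_real.1 h1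
        rw [hξ, norm_neg, hζnorm, one_smul, one_smul] at h2
        refine hζspan (Submodule.mem_span_singleton.2 ⟨-1, ?_⟩)
        rw [neg_one_smul, h2, neg_neg]
  set s : ℝ := Real.sqrt (1 - c ^ 2) with hsdef
  have hs2 : s ^ 2 = 1 - c ^ 2 := Real.sq_sqrt (by linarith)
  have hspos : 0 < s := Real.sqrt_pos.2 (by linarith)
  clear_value s
  have hcs : c ^ 2 + s ^ 2 = 1 := by rw [hs2]; ring
  have horbit : ∀ x : M, ‖x‖ = 1 → ∃ w ∈ G, w ξ = x := by
    have main : ∀ n : ℕ, ∀ t : ℝ, |t| ≤ 1 → 1 - t ≤ n * (s ^ 2 / 2) →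
        ∀ x : M, ‖x‖ = 1 → (inner ℝ ξ x : ℝ) = t → ∃ w ∈ G, w ξ = x := by
      intro n
      induction n with
      | zero =>
        intro t ht hle x hx hxt
        have ht1 : t = 1 := by
          norm_num at hle
          linarith [(abs_le.1 ht).2]
        have hx1 : (inner ℝ ξ x : ℝ) = ‖ξ‖ * ‖x‖ := by rw [hξ, hx, hxt, ht1]; norm_num
        have h2 := inner_eq_norm_mul_iff_real.1 hx1
        rw [hξ, hx, one_smul, one_smul] at h2
        refine ⟨1, one_mem G, ?_⟩
        simpa using h2
      | succ n ih =>
        intro t ht hle x hx hxt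
        by_cases hcase : 1 - t ≤ n * (s ^ 2 / 2)
        · exact ih t ht hcase x hx hxt
        have hδ : 0 < s ^ 2 / 2 := by positivity
        obtain ⟨htl, htu⟩ := abs_le.1 ht
        set t₁ : ℝ := min 1 (t + s ^ 2 / 2) with ht₁def
        have ht₁u : t₁ ≤ 1 := min_le_left _ _
        have ht₁l : t ≤ t₁ := le_min htu (by linarith)
        have ht₁abs : |t₁| ≤ 1 := abs_le.2 ⟨by linarith, ht₁u⟩
        have hstep : |t - t₁| ≤ s ^ 2 / 2 := by
          rw [abs_le]
          have h1 : t₁ ≤ t + s ^ 2 / 2 := min_le_right _ _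
          constructor <;> linarith
        have ht₁le : 1 - t₁ ≤ n * (s ^ 2 / 2) := by
          rcases min_cases 1 (t + s ^ 2 / 2) with ⟨h1, _⟩ | ⟨h1, _⟩
          · rw [ht₁def, h1]; norm_num; positivity
          · rw [ht₁def, h1]
            push_cast at hle ⊢
            linarith
        obtain ⟨vv, hv1, hv2⟩ := overlap hcs hspos ht ht₁abs hstep
        obtain ⟨x₂, hx₂n, hx₂ξ, hx₂ζ⟩ :=
          exists_unit_inner hdim hξ hζnorm hcdef.symm hs2 hspos ht hv1
        obtain ⟨x₁, hx₁n, hx₁ξ, hx₁ζ⟩ :=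
          exists_unit_inner hdim hξ hζnorm hcdef.symm hs2 hspos ht₁abs hv2
        obtain ⟨w₁, hw₁G, hw₁⟩ := ih t₁ ht₁abs ht₁le x₁ hx₁n hx₁ξ
        obtain ⟨k, hkG, hk⟩ := hKmove x₁ x₂ hx₁n hx₂n (by rw [hx₁ζ, hx₂ζ])
        obtain ⟨h, hhG, hh⟩ := hHmove x₂ x hx₂n hx (by rw [hx₂ξ, hxt])
        refine ⟨h * (k * w₁), mul_mem hhG (mul_mem hkG hw₁G), ?_⟩
        show h (k (w₁ ξ)) = x
        rw [hw₁, hk, hh]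
    intro x hx
    have ht : |(inner ℝ ξ x : ℝ)| ≤ 1 := by
      have h := abs_real_inner_le_norm ξ x
      rw [hξ, hx] at h; simpa using h
    have hδ : 0 < s ^ 2 / 2 := by positivity
    obtain ⟨n, hn⟩ := exists_nat_ge (2 / (s ^ 2 / 2))
    have h2 : 2 ≤ (n : ℝ) * (s ^ 2 / 2) := by
      rw [div_le_iff₀ hδ] at hn; linarith
    exact main n _ ht (by linarith [(abs_le.1 ht).1]) x hx rfl
  have hdetG : ∀ w : M ≃ₗᵢ[ℝ] M, w ∈ G → LinearEquiv.det w.toLinearEquiv = 1 := by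
    intro w hw
    have hle : G ≤ detIso.ker := by
      rw [hGdef]
      apply (Subgroup.closure_le _).2
      rintro k (hk | ⟨h', hh', rfl⟩)
      · simp only [SetLike.mem_coe, MonoidHom.mem_ker]
        exact hk.1
      · simp only [SetLike.mem_coe, MonoidHom.mem_ker]
        rw [map_mul, map_mul, map_inv, show detIso h' = 1 from hh'.1, mul_one]
        simp
    exact hle hw
  obtain ⟨w, hwG, hwξ⟩ := horbit (g ξ) (by rw [g.norm_map, hξ])
  have hfix : (w⁻¹ * g) ξ = ξ := by
    show w⁻¹ (g ξ) = ξ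
    rw [← hwξ]; exact w.symm_apply_apply ξ
  have hdetw : LinearEquiv.det (w⁻¹ * g).toLinearEquiv = 1 := by
    have h : detIso (w⁻¹ * g) = 1 := by
      rw [map_mul, map_inv, show detIso w = 1 from hdetG w hwG,
        show detIso g = 1 from hdetg]
      simp
    exact h
  have hWG : w⁻¹ * g ∈ G := hHsub _ hdetw hfix
  have hfin : g = w * (w⁻¹ * g) := by group
  rw [hfin]
  exact mul_mem hwG hWG
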